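/- Let K ⊆ {0,1,2,3}^k represent a k-dimensional USO, and let (S^(0), S^(1), S^(2), S^(3)) be a simple rewriting rule with target dimension d. Then for any h ∈ [k], the set S_h(K) ⊆ {0,1,2,3}^{k+d-1} obtained by replacing, in each string v ∈ K, the entry v_h by each string of S^(v_h), represents a (k+d-1)-dimensional USO. -/

import Mathlib

/-- Strings `v` and `w` differ by exactly 2 in coordinate `i`. -/
def Diff2At (v w : List (Fin 4)) (i : ℕ) : Prop :=
  (v.getD i 0 : ℕ) = (w.getD i 0 : ℕ) + 2 ∨ (w.getD i 0 : ℕ) = (v.getD i 0 : ℕ) + 2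

/-- A set of strings in `{0,1,2,3}^n` represents an `n`-dimensional USO
(a `4ℤ^n`-periodic cube tiling): all strings have length `n`, there are `2^n`
of them, and any two distinct ones differ by exactly 2 in some coordinate. -/
def IsUSOSet (n : ℕ) (K : Finset (List (Fin 4))) : Prop :=
  (∀ v ∈ K, v.length = n) ∧ K.card = 2 ^ n ∧
    ∀ v ∈ K, ∀ w ∈ K, v ≠ w → ∃ i : ℕ, i < n ∧ Diff2At v w i

/-- Replace the entry of `v` at (0-indexed) position `h` by the string `s`. -/
def splice (v : List (Fin 4)) (h : ℕ) (s : List (Fin 4)) : List (Fin 4) :=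
  v.take h ++ s ++ v.drop (h + 1)

/-- A simple rewriting rule `(S⁽⁰⁾, S⁽¹⁾, S⁽²⁾, S⁽³⁾)` with target dimension `d`. -/
def IsSimpleRule (d : ℕ) (S : Fin 4 → Finset (List (Fin 4))) : Prop :=
  Disjoint (S 0) (S 2) ∧ IsUSOSet d (S 0 ∪ S 2) ∧
    Disjoint (S 1) (S 3) ∧ IsUSOSet d (S 1 ∪ S 3)

/-- Applying a simple rewriting rule at (0-indexed) dimension `h`:
`S_h(K) = ⋃_{v ∈ K} { v₁…v_{h-1} s v_{h+1}…v_k : s ∈ S^(v_h) }`. -/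
def rewriteSet (S : Fin 4 → Finset (List (Fin 4))) (h : ℕ)
    (K : Finset (List (Fin 4))) : Finset (List (Fin 4)) :=
  K.biUnion fun v => (S (v.getD h 0)).image (splice v h)

/-! ### Auxiliary lemmas -/

lemma getD_eq (l : List (Fin 4)) (n : ℕ) : l.getD n 0 = l[n]?.getD 0 := by
  simp [List.getD_eq_getElem?_getD]

lemma splice_length (v s : List (Fin 4)) (h : ℕ) (hh : h < v.length) :
    (splice v h s).length = v.length + s.length - 1 := by
  simp [splice]; omega

lemma splice_getD_left (v s : List (Fin 4)) (h j : ℕ) (hj : j < h) (hh : h ≤ v.length) :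
    (splice v h s).getD j 0 = v.getD j 0 := by
  have h1 : j < (v.take h).length := by simp; omega
  rw [splice, List.append_assoc, getD_eq, List.getElem?_append_left h1, getD_eq,
    List.getElem?_take, if_pos hj]

lemma splice_getD_mid (v s : List (Fin 4)) (h i : ℕ) (hi : i < s.length) (hh : h ≤ v.length) :
    (splice v h s).getD (h + i) 0 = s.getD i 0 := by
  have h1 : (v.take h).length = h := by simp; omega
  rw [splice, List.append_assoc, getD_eq,
    List.getElem?_append_right (by omega : (v.take h).length ≤ h + i), h1,
    Nat.add_sub_cancel_left, List.getElem?_append_left hi, getD_eq]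

lemma splice_getD_right (v s : List (Fin 4)) (h m : ℕ) (hh : h ≤ v.length) :
    (splice v h s).getD (h + s.length + m) 0 = v.getD (h + 1 + m) 0 := by
  have h1 : (v.take h).length = h := by simp; omega
  rw [splice, List.append_assoc, getD_eq,
    List.getElem?_append_right (by omega : (v.take h).length ≤ h + s.length + m), h1,
    List.getElem?_append_right (by omega : s.length ≤ h + s.length + m - h)]
  have : h + s.length + m - h - s.length = m := by omega
  rw [this, List.getElem?_drop, getD_eq, Nat.add_comm (h+1) m]

lemma rule_length {d : ℕ} {S : Fin 4 → Finset (List (Fin 4))} (hS : IsSimpleRule d S)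
    {c : Fin 4} {s : List (Fin 4)} (hs : s ∈ S c) : s.length = d := by
  obtain ⟨h02, hU02, h13, hU13⟩ := hS
  fin_cases c
  · exact hU02.1 s (Finset.mem_union_left _ hs)
  · exact hU13.1 s (Finset.mem_union_left _ hs)
  · exact hU02.1 s (Finset.mem_union_right _ hs)
  · exact hU13.1 s (Finset.mem_union_right _ hs)

lemma rule_cover {d : ℕ} {S : Fin 4 → Finset (List (Fin 4))} (hS : IsSimpleRule d S)
    (c c' : Fin 4) (hcc : c = c' ∨ (c : ℕ) = (c' : ℕ) + 2 ∨ (c' : ℕ) = (c : ℕ) + 2) :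
    ∃ T, IsUSOSet d T ∧ S c ⊆ T ∧ S c' ⊆ T ∧ (c ≠ c' → Disjoint (S c) (S c')) := by
  obtain ⟨h02, hU02, h13, hU13⟩ := hS
  fin_cases c <;> fin_cases c' <;>
    first
    | exact absurd hcc (by decide)
    | exact ⟨S 0 ∪ S 2, hU02, Finset.subset_union_left, Finset.subset_union_left,
        fun hne => absurd rfl hne⟩
    | exact ⟨S 0 ∪ S 2, hU02, Finset.subset_union_left, Finset.subset_union_right,
        fun _ => h02⟩
    | exact ⟨S 0 ∪ S 2, hU02, Finset.subset_union_right, Finset.subset_union_left,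
        fun _ => h02.symm⟩
    | exact ⟨S 0 ∪ S 2, hU02, Finset.subset_union_right, Finset.subset_union_right,
        fun hne => absurd rfl hne⟩
    | exact ⟨S 1 ∪ S 3, hU13, Finset.subset_union_left, Finset.subset_union_left,
        fun hne => absurd rfl hne⟩
    | exact ⟨S 1 ∪ S 3, hU13, Finset.subset_union_left, Finset.subset_union_right,
        fun _ => h13⟩
    | exact ⟨S 1 ∪ S 3, hU13, Finset.subset_union_right, Finset.subset_union_left,
        fun _ => h13.symm⟩
    | exact ⟨S 1 ∪ S 3, hU13, Finset.subset_union_right, Finset.subset_union_right,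
        fun hne => absurd rfl hne⟩

lemma splice_inj {k d : ℕ} {K : Finset (List (Fin 4))} {S : Fin 4 → Finset (List (Fin 4))}
    (hK : IsUSOSet k K) (hS : IsSimpleRule d S) {h : ℕ} (hh : h < k)
    {v w s t : List (Fin 4)} (hv : v ∈ K) (hw : w ∈ K)
    (hs : s ∈ S (v.getD h 0)) (ht : t ∈ S (w.getD h 0))
    (he : splice v h s = splice w h t) : v = w ∧ s = t := by
  have hvl : v.length = k := hK.1 v hv
  have hwl : w.length = k := hK.1 w hw
  have hsl : s.length = d := rule_length hS hs
  have htl : t.length = d := rule_length hS ht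
  have h1 : (v.take h).length = (w.take h).length := by simp; omega
  rw [splice, splice, List.append_assoc, List.append_assoc] at he
  obtain ⟨htake, he2⟩ := List.append_inj he h1
  obtain ⟨hst, hdrop⟩ := List.append_inj he2 (by omega)
  refine ⟨?_, hst⟩
  by_contra hne
  obtain ⟨i, hi, hd⟩ := hK.2.2 v hv w hw hne
  have hgetD : ∀ j : ℕ, j ≠ h → v.getD j 0 = w.getD j 0 := by
    intro j hj
    rcases lt_trichotomy j h with hlt | rfl | hgt
    · rw [getD_eq, getD_eq]
      have e1 : v[j]? = (v.take h)[j]? := by rw [List.getElem?_take, if_pos hlt]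
      have e2 : w[j]? = (w.take h)[j]? := by rw [List.getElem?_take, if_pos hlt]
      rw [e1, e2, htake]
    · exact absurd rfl hj
    · rw [getD_eq, getD_eq]
      have e1 : v[j]? = (v.drop (h+1))[j - (h+1)]? := by
        rw [List.getElem?_drop]; congr 1; omega
      have e2 : w[j]? = (w.drop (h+1))[j - (h+1)]? := by
        rw [List.getElem?_drop]; congr 1; omega
      rw [e1, e2, hdrop]
  by_cases hih : i = h
  · subst hih
    rw [Diff2At] at hd
    have hne' : v.getD i 0 ≠ w.getD i 0 := by
      intro he'
      rw [he'] at hd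
      omega
    obtain ⟨T, _, _, _, hdisj⟩ := rule_cover hS (v.getD i 0) (w.getD i 0) (Or.inr hd)
    have := hdisj hne'
    rw [Finset.disjoint_left] at this
    exact this hs (hst ▸ ht)
  · have := hgetD i hih
    rw [Diff2At, this] at hd
    omega

lemma key' (n : ℕ) (K : Finset (Fin n → Fin 4)) (hcard : K.card = 2 ^ n)
    (hdiff : ∀ f ∈ K, ∀ g ∈ K, f ≠ g → ∃ i, f i = g i + 2) (h : Fin n) (c : Fin 4) :
    (K.filter fun f => f h = c).card = (K.filter fun f => f h = c + 2).card := by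
  classical
  set Φ : (Fin n → Fin 4) × (Fin n → Fin 2) → (Fin n → Fin 4) :=
    fun x i => x.1 i + (x.2 i).castLE (by norm_num) with hΦ
  have hinj : Set.InjOn Φ ↑(K ×ˢ (Finset.univ : Finset (Fin n → Fin 2))) := by
    rintro ⟨f, ε⟩ hf ⟨g, δ⟩ hg heq
    rw [Finset.mem_coe, Finset.mem_product] at hf hg
    have heq' : ∀ i, f i + (ε i).castLE (by norm_num) = g i + (δ i).castLE (by norm_num) := by
      intro i; exact congrFun heq i
    have hfg : f = g := by
      by_contra hne
      obtain ⟨i, hi⟩ := hdiff f hf.1 g hg.1 hne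
      have := heq' i
      rw [hi] at this
      revert this
      generalize g i = b; generalize ε i = e; generalize δ i = e'
      revert b e e'; decide
    subst hfg
    have : ε = δ := by
      funext i
      have := heq' i
      have h2 : ∀ (b : Fin 4) (e e' : Fin 2),
          b + e.castLE (by norm_num) = b + e'.castLE (by norm_num) → e = e' := by decide
      exact h2 (f i) (ε i) (δ i) this
    simp [this]
  have hcover : ∀ p : Fin n → Fin 4, ∃ g ∈ K, ∃ ε : Fin n → Fin 2,
      ∀ i, p i = g i + (ε i).castLE (by norm_num) := by
    have himg : ((K ×ˢ (Finset.univ : Finset (Fin n → Fin 2))).image Φ) = Finset.univ := by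
      apply Finset.eq_univ_of_card
      rw [Finset.card_image_of_injOn hinj, Finset.card_product, hcard, Finset.card_univ]
      simp [Fintype.card_fun, ← mul_pow]
    intro p
    have : p ∈ ((K ×ˢ (Finset.univ : Finset (Fin n → Fin 2))).image Φ) := by
      rw [himg]; exact Finset.mem_univ p
    obtain ⟨⟨g, ε⟩, hmem, hgp⟩ := Finset.mem_image.mp this
    refine ⟨g, (Finset.mem_product.mp hmem).1, ε, fun i => ?_⟩
    rw [← hgp]
  have step : ∀ c : Fin 4,
      (K.filter fun f => f h = c).card ≤ (K.filter fun f => f h = c + 2).card := by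
    intro c
    set F : (Fin n → Fin 4) → (Fin n → Fin 4) :=
      fun f => (hcover (Function.update f h (f h + 2))).choose with hF
    have hFspec : ∀ f, F f ∈ K ∧ ∃ ε : Fin n → Fin 2,
        ∀ i, Function.update f h (f h + 2) i = F f i + (ε i).castLE (by norm_num) := by
      intro f
      obtain ⟨hm, ε, hε⟩ := (hcover (Function.update f h (f h + 2))).choose_spec
      exact ⟨hm, ε, hε⟩
    have hFh : ∀ f ∈ K, F f h = f h + 2 := by
      intro f hf
      obtain ⟨hm, ε, hε⟩ := hFspec f
      have hh := hε h
      rw [Function.update_self] at hh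
      have hne : f ≠ F f := by
        intro he
        rw [← he] at hh
        revert hh
        generalize f h = b; generalize ε h = e
        revert b e; decide
      obtain ⟨i, hi⟩ := hdiff f hf (F f) hm hne
      by_cases hih : i = h
      · subst hih
        have : ∀ (a b : Fin 4), a = b + 2 → b = a + 2 := by decide
        exact this _ _ hi
      · exfalso
        have hhi := hε i
        rw [Function.update_of_ne hih] at hhi
        rw [hi] at hhi
        revert hhi
        generalize F f i = b; generalize ε i = e
        revert b e; decide
    have hmaps : ∀ f ∈ K.filter (fun f => f h = c), F f ∈ K.filter (fun f => f h = c + 2) := by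
      intro f hf
      rw [Finset.mem_filter] at hf ⊢
      exact ⟨(hFspec f).1, by rw [hFh f hf.1, hf.2]⟩
    have hinjF : Set.InjOn F (K.filter (fun f => f h = c)) := by
      intro f hf g hg he
      simp only [Finset.coe_filter, Set.mem_setOf_eq] at hf hg
      by_contra hne
      obtain ⟨i, hi⟩ := hdiff f hf.1 g hg.1 hne
      obtain ⟨_, ε, hε⟩ := hFspec f
      obtain ⟨_, δ, hδ⟩ := hFspec g
      by_cases hih : i = h
      · subst hih
        rw [hf.2, hg.2] at hi
        revert hi
        have : ∀ c : Fin 4, c ≠ c + 2 := by decide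
        exact this c
      · have h1 := hε i
        have h2 := hδ i
        rw [Function.update_of_ne hih] at h1 h2
        rw [he] at h1
        rw [h1, h2] at hi
        revert hi
        generalize F g i = b; generalize ε i = e; generalize δ i = e'
        revert b e e'; decide
    exact Finset.card_le_card_of_injOn F hmaps hinjF
  have h22 : ∀ c : Fin 4, c + 2 + 2 = c := by decide
  refine le_antisymm (step c) ?_
  have := step (c + 2)
  rwa [h22 c] at this

lemma diff2_fin (a b : Fin 4) (hab : (a : ℕ) = (b : ℕ) + 2 ∨ (b : ℕ) = (a : ℕ) + 2) :
    a = b + 2 := by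
  revert hab; revert a b; decide

lemma fiber_card_eq (n : ℕ) (K : Finset (List (Fin 4))) (hK : IsUSOSet n K)
    (h : ℕ) (hh : h < n) (c : Fin 4) :
    (K.filter fun v => v.getD h 0 = c).card = (K.filter fun v => v.getD h 0 = c + 2).card := by
  classical
  obtain ⟨hlen, hcard, hdiff⟩ := hK
  set T : List (Fin 4) → (Fin n → Fin 4) := fun v i => v.getD (i : ℕ) 0 with hT
  have hTinj : Set.InjOn T K := by
    intro v hv w hw he
    apply List.ext_getElem (by rw [hlen v hv, hlen w hw])
    intro i h1 h2
    have h3 : i < n := by rw [← hlen v hv]; exact h1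
    have := congrFun he ⟨i, h3⟩
    simp only [hT] at this
    rw [getD_eq, getD_eq] at this
    rwa [List.getElem?_eq_getElem h1, List.getElem?_eq_getElem h2] at this
  have hTcard : (K.image T).card = 2 ^ n := by rw [Finset.card_image_of_injOn hTinj, hcard]
  have hTdiff : ∀ f ∈ K.image T, ∀ g ∈ K.image T, f ≠ g → ∃ i, f i = g i + 2 := by
    intro f hf g hg hne
    obtain ⟨v, hv, rfl⟩ := Finset.mem_image.mp hf
    obtain ⟨w, hw, rfl⟩ := Finset.mem_image.mp hg
    have hvw : v ≠ w := fun he => hne (by rw [he])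
    obtain ⟨i, hi, hd⟩ := hdiff v hv w hw hvw
    exact ⟨⟨i, hi⟩, diff2_fin _ _ hd⟩
  have htransfer : ∀ c : Fin 4, ((K.image T).filter fun f => f ⟨h, hh⟩ = c).card
      = (K.filter fun v => v.getD h 0 = c).card := by
    intro c
    rw [Finset.filter_image]
    rw [Finset.card_image_of_injOn
      (hTinj.mono (Finset.coe_subset.mpr (Finset.filter_subset _ _)))]
  rw [← htransfer c, ← htransfer (c + 2)]
  exact key' n (K.image T) hTcard hTdiff ⟨h, hh⟩ c

theorem stmt3 (k d : ℕ) (K : Finset (List (Fin 4))) (hK : IsUSOSet k K)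
    (S : Fin 4 → Finset (List (Fin 4))) (hS : IsSimpleRule d S)
    (h : ℕ) (hh : h < k) :
    IsUSOSet (k + d - 1) (rewriteSet S h K) := by
  classical
  have hmem : ∀ x, x ∈ rewriteSet S h K ↔
      ∃ v ∈ K, ∃ s ∈ S (v.getD h 0), splice v h s = x := by
    intro x
    simp [rewriteSet, Finset.mem_biUnion, Finset.mem_image]
  refine ⟨?_, ?_, ?_⟩
  · -- lengths
    intro x hx
    obtain ⟨v, hv, s, hs, rfl⟩ := (hmem x).mp hx
    rw [splice_length v s h (by rw [hK.1 v hv]; exact hh), hK.1 v hv, rule_length hS hs]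
  · -- cardinality
    have hdisj : ∀ v ∈ K, ∀ w ∈ K, v ≠ w →
        Disjoint ((S (v.getD h 0)).image (splice v h)) ((S (w.getD h 0)).image (splice w h)) := by
      intro v hv w hw hvw
      rw [Finset.disjoint_left]
      intro x hx1 hx2
      obtain ⟨s, hs, hsx⟩ := Finset.mem_image.mp hx1
      obtain ⟨t, ht, htx⟩ := Finset.mem_image.mp hx2
      exact hvw (splice_inj hK hS hh hv hw hs ht (hsx.trans htx.symm)).1
    rw [rewriteSet, Finset.card_biUnion hdisj]
    have himg : ∀ v ∈ K, ((S (v.getD h 0)).image (splice v h)).card = (S (v.getD h 0)).card := by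
      intro v hv
      apply Finset.card_image_of_injOn
      intro s hs t ht he
      exact (splice_inj hK hS hh hv hv hs ht he).2
    rw [Finset.sum_congr rfl himg]
    -- partition the sum by the value of v.getD h 0
    have hpart : ∑ v ∈ K, (S (v.getD h 0)).card
        = ∑ c : Fin 4, ∑ v ∈ K.filter (fun v => v.getD h 0 = c), (S (v.getD h 0)).card := by
      rw [Finset.sum_fiberwise_of_maps_to (fun v _ => Finset.mem_univ (v.getD h 0))]
    rw [hpart]
    have hconst : ∀ c : Fin 4, ∑ v ∈ K.filter (fun v => v.getD h 0 = c), (S (v.getD h 0)).card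
        = (K.filter (fun v => v.getD h 0 = c)).card * (S c).card := by
      intro c
      rw [Finset.sum_congr rfl (fun v hv => by rw [(Finset.mem_filter.mp hv).2]),
        Finset.sum_const, smul_eq_mul]
    rw [Finset.sum_congr rfl (fun c _ => hconst c), Fin.sum_univ_four]
    set N0 := (K.filter (fun v => v.getD h 0 = 0)).card with hN0
    set N1 := (K.filter (fun v => v.getD h 0 = 1)).card with hN1
    have h20 : (K.filter (fun v => v.getD h 0 = 2)).card = N0 :=
      (fiber_card_eq k K hK h hh 0).symm
    have h31 : (K.filter (fun v => v.getD h 0 = 3)).card = N1 :=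
      (fiber_card_eq k K hK h hh 1).symm
    rw [h20, h31]
    have hsum : N0 + N1 + N0 + N1 = 2 ^ k := by
      have := Finset.card_eq_sum_card_fiberwise
        (fun v (hv : v ∈ K) => Finset.mem_univ (v.getD h 0))
      rw [hK.2.1] at this
      rw [Fin.sum_univ_four, h20, h31] at this
      omega
    have hS02 : (S 0).card + (S 2).card = 2 ^ d := by
      rw [← Finset.card_union_of_disjoint hS.1, hS.2.1.2.1]
    have hS13 : (S 1).card + (S 3).card = 2 ^ d := by
      rw [← Finset.card_union_of_disjoint hS.2.2.1, hS.2.2.2.2.1]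
    have hN01 : N0 + N1 = 2 ^ (k - 1) := by
      have h2 : 2 ^ k = 2 * 2 ^ (k - 1) := by
        rw [← pow_succ']
        congr 1
        omega
      omega
    calc N0 * (S 0).card + N1 * (S 1).card + N0 * (S 2).card + N1 * (S 3).card
        = N0 * ((S 0).card + (S 2).card) + N1 * ((S 1).card + (S 3).card) := by ring
      _ = (N0 + N1) * 2 ^ d := by rw [hS02, hS13]; ring
      _ = 2 ^ (k - 1) * 2 ^ d := by rw [hN01]
      _ = 2 ^ (k + d - 1) := by rw [← pow_add]; congr 1; omega
  · -- the Diff2At property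
    intro x hx y hy hxy
    obtain ⟨v, hv, s, hs, rfl⟩ := (hmem x).mp hx
    obtain ⟨w, hw, t, ht, rfl⟩ := (hmem y).mp hy
    have hvl : v.length = k := hK.1 v hv
    have hwl : w.length = k := hK.1 w hw
    have hsl : s.length = d := rule_length hS hs
    have htl : t.length = d := rule_length hS ht
    have hvh : h ≤ v.length := by omega
    have hwh : h ≤ w.length := by omega
    -- helper for the middle-coordinate case
    have mid_case : ∀ (hcc : v.getD h 0 = w.getD h 0 ∨
          ((v.getD h 0 : ℕ) = (w.getD h 0 : ℕ) + 2 ∨ (w.getD h 0 : ℕ) = (v.getD h 0 : ℕ) + 2)),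
        s ≠ t → ∃ i : ℕ, i < k + d - 1 ∧ Diff2At (splice v h s) (splice w h t) i := by
      intro hcc hst
      obtain ⟨T, hTuso, hsub1, hsub2, _⟩ := rule_cover hS (v.getD h 0) (w.getD h 0) hcc
      obtain ⟨j, hj, hd⟩ := hTuso.2.2 s (hsub1 hs) t (hsub2 ht) hst
      refine ⟨h + j, by omega, ?_⟩
      rw [Diff2At, splice_getD_mid v s h j (by omega) hvh,
        splice_getD_mid w t h j (by omega) hwh]
      exact hd
    by_cases hvw : v = w
    · subst hvw
      have hst : s ≠ t := fun he => hxy (by rw [he])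
      exact mid_case (Or.inl rfl) hst
    · obtain ⟨i, hi, hd⟩ := hK.2.2 v hv w hw hvw
      rcases lt_trichotomy i h with hlt | rfl | hgt
      · refine ⟨i, by omega, ?_⟩
        rw [Diff2At, splice_getD_left v s h i hlt hvh, splice_getD_left w t h i hlt hwh]
        exact hd
      · -- i = h : the values at h differ by 2, so S (v_h) and S (w_h) are disjoint
        rw [Diff2At] at hd
        have hne' : v.getD i 0 ≠ w.getD i 0 := by
          intro he'
          rw [he'] at hd
          omega
        have hst : s ≠ t := by
          intro he
          obtain ⟨T, _, _, _, hdisj⟩ := rule_cover hS (v.getD i 0) (w.getD i 0) (Or.inr hd)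
          have := hdisj hne'
          rw [Finset.disjoint_left] at this
          exact this hs (he ▸ ht)
        exact mid_case (Or.inr hd) hst
      · refine ⟨h + d + (i - h - 1), by omega, ?_⟩
        have e1 : h + d + (i - h - 1) = h + s.length + (i - h - 1) := by omega
        have e2 : h + d + (i - h - 1) = h + t.length + (i - h - 1) := by omega
        rw [Diff2At]
        rw [show (splice v h s).getD (h + d + (i - h - 1)) 0
            = (splice v h s).getD (h + s.length + (i - h - 1)) 0 by rw [← e1]]
        rw [show (splice w h t).getD (h + d + (i - h - 1)) 0
            = (splice w h t).getD (h + t.length + (i - h - 1)) 0 by rw [← e2]]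
        rw [splice_getD_right v s h (i - h - 1) hvh, splice_getD_right w t h (i - h - 1) hwh]
        have : h + 1 + (i - h - 1) = i := by omega
        rw [this]
        exact hd
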